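/- arXiv:1812.06634 — 2 statements merged into one kernel-verified Lean document; each statement's English description precedes it below -/
import Mathlib

section
/- Let b ∈ ℝ³, b ≠ 0, and α > 0. A point μ ∈ ℝ³ with ‖μ‖ = 1 satisfies −μ × b − α μ × (μ × b) = 0 if and only if μ = b/‖b‖ or μ = −b/‖b‖. -/
open RealInnerProductSpace

noncomputable def cross3 (u v : EuclideanSpace ℝ (Fin 3)) : EuclideanSpace ℝ (Fin 3) :=
  WithLp.toLp 2 ![u 1 * v 2 - u 2 * v 1, u 2 * v 0 - u 0 * v 2, u 0 * v 1 - u 1 * v 0]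

theorem landau_lifshitz_equilibria (α : ℝ) (hα : 0 < α)
    (b : EuclideanSpace ℝ (Fin 3)) (hb : b ≠ 0) :
    ∀ μ : EuclideanSpace ℝ (Fin 3), ‖μ‖ = 1 →
      (-(cross3 μ b) - α • cross3 μ (cross3 μ b) = 0 ↔
        μ = ‖b‖⁻¹ • b ∨ μ = -(‖b‖⁻¹ • b)) := by
  intro μ hμ
  have hμ2 : (μ 0)^2 + (μ 1)^2 + (μ 2)^2 = 1 := by
    have h := congrArg (·^2) hμ
    simp only [one_pow] at h
    rw [EuclideanSpace.norm_eq, Real.sq_sqrt (by positivity), Fin.sum_univ_three] at h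
    simpa [sq_abs] using h
  set B : ℝ := (b 0)^2 + (b 1)^2 + (b 2)^2 with hB
  have hBnn : (0:ℝ) ≤ B := by positivity
  have hBpos : 0 < B := by
    rcases lt_or_eq_of_le hBnn with h | h
    · exact h
    · exfalso; apply hb; ext i
      fin_cases i <;>
        simp <;> nlinarith [sq_nonneg (b 0), sq_nonneg (b 1), sq_nonneg (b 2)]
  set sB : ℝ := Real.sqrt B with hsBdef
  have hsB2 : sB^2 = B := Real.sq_sqrt hBnn
  have hsBpos : 0 < sB := Real.sqrt_pos.mpr hBpos
  have hnb : ‖b‖ = sB := by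
    rw [EuclideanSpace.norm_eq, Fin.sum_univ_three, hsBdef]
    congr 1
    simp [sq_abs, hB]
  constructor
  · intro h
    have h0 : ∀ i, (-(cross3 μ b) - α • cross3 μ (cross3 μ b)) i = 0 := by
      intro i; rw [h]; simp
    have e0 := h0 0
    have e1 := h0 1
    have e2 := h0 2
    simp only [cross3, PiLp.sub_apply, PiLp.neg_apply, PiLp.smul_apply, smul_eq_mul, PiLp.toLp_apply,
      Matrix.cons_val_zero, Matrix.cons_val_one, Matrix.head_cons,
      Matrix.cons_val_two, Matrix.tail_cons] at e0 e1 e2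
    have hsum : (μ 1 * b 2 - μ 2 * b 1)^2 + (μ 2 * b 0 - μ 0 * b 2)^2
        + (μ 0 * b 1 - μ 1 * b 0)^2 = 0 := by
      linear_combination (-(μ 1 * b 2 - μ 2 * b 1)) * e0
        + (-(μ 2 * b 0 - μ 0 * b 2)) * e1 + (-(μ 0 * b 1 - μ 1 * b 0)) * e2
    clear e0 e1 e2 h0 h
    have hc0 : μ 1 * b 2 - μ 2 * b 1 = 0 := by
      have : (μ 1 * b 2 - μ 2 * b 1)^2 = 0 := by
        linarith [sq_nonneg (μ 2 * b 0 - μ 0 * b 2), sq_nonneg (μ 0 * b 1 - μ 1 * b 0),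
          sq_nonneg (μ 1 * b 2 - μ 2 * b 1)]
      exact sq_eq_zero_iff.mp this
    have hc1 : μ 2 * b 0 - μ 0 * b 2 = 0 := by
      have : (μ 2 * b 0 - μ 0 * b 2)^2 = 0 := by
        linarith [sq_nonneg (μ 2 * b 0 - μ 0 * b 2), sq_nonneg (μ 0 * b 1 - μ 1 * b 0),
          sq_nonneg (μ 1 * b 2 - μ 2 * b 1)]
      exact sq_eq_zero_iff.mp this
    have hc2 : μ 0 * b 1 - μ 1 * b 0 = 0 := by
      have : (μ 0 * b 1 - μ 1 * b 0)^2 = 0 := by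
        linarith [sq_nonneg (μ 2 * b 0 - μ 0 * b 2), sq_nonneg (μ 0 * b 1 - μ 1 * b 0),
          sq_nonneg (μ 1 * b 2 - μ 2 * b 1)]
      exact sq_eq_zero_iff.mp this
    set d : ℝ := μ 0 * b 0 + μ 1 * b 1 + μ 2 * b 2 with hd
    have rel0 : B * μ 0 = d * b 0 := by rw [hB, hd]; linear_combination b 1 * hc2 - b 2 * hc1
    have rel1 : B * μ 1 = d * b 1 := by rw [hB, hd]; linear_combination b 2 * hc0 - b 0 * hc2
    have rel2 : B * μ 2 = d * b 2 := by rw [hB, hd]; linear_combination b 0 * hc1 - b 1 * hc0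
    have hd2 : d^2 = B := by
      have : B * ((μ 0)^2 + (μ 1)^2 + (μ 2)^2) = d * d := by
        linear_combination μ 0 * rel0 + μ 1 * rel1 + μ 2 * rel2
      rw [hμ2] at this; linarith [this]
    have hfac : (d - sB) * (d + sB) = 0 := by
      have : d^2 - sB^2 = 0 := by rw [hd2, hsB2]; ring
      linear_combination this
    rcases mul_eq_zero.mp hfac with hcase | hcase
    · left
      have hdsB : d = sB := by linarith
      have hne : sB ≠ 0 := ne_of_gt hsBpos
      have hk0 : sB * μ 0 = b 0 := by
        refine mul_left_cancel₀ hne ?_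
        linear_combination rel0 + μ 0 * hsB2 + b 0 * hdsB
      have hk1 : sB * μ 1 = b 1 := by
        refine mul_left_cancel₀ hne ?_
        linear_combination rel1 + μ 1 * hsB2 + b 1 * hdsB
      have hk2 : sB * μ 2 = b 2 := by
        refine mul_left_cancel₀ hne ?_
        linear_combination rel2 + μ 2 * hsB2 + b 2 * hdsB
      have key : ∀ j : Fin 3, μ j = ‖b‖⁻¹ * b j := by
        intro j
        rw [hnb, eq_inv_mul_iff_mul_eq₀ hne]
        fin_cases j
        · exact hk0
        · exact hk1
        · exact hk2
      ext i
      exact key i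
    · right
      have hdsB : d = -sB := by linarith
      have hne : sB ≠ 0 := ne_of_gt hsBpos
      have hk0 : sB * μ 0 = -(b 0) := by
        refine mul_left_cancel₀ hne ?_
        linear_combination rel0 + μ 0 * hsB2 + b 0 * hdsB
      have hk1 : sB * μ 1 = -(b 1) := by
        refine mul_left_cancel₀ hne ?_
        linear_combination rel1 + μ 1 * hsB2 + b 1 * hdsB
      have hk2 : sB * μ 2 = -(b 2) := by
        refine mul_left_cancel₀ hne ?_
        linear_combination rel2 + μ 2 * hsB2 + b 2 * hdsB
      have key : ∀ j : Fin 3, μ j = -(‖b‖⁻¹ * b j) := by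
        intro j
        rw [hnb, ← mul_neg, eq_inv_mul_iff_mul_eq₀ hne]
        fin_cases j
        · exact hk0
        · exact hk1
        · exact hk2
      ext i
      exact key i
  · intro h
    have hcsmul : ∀ c : ℝ, cross3 (c • b) b = 0 := by
      intro c
      ext i
      fin_cases i <;> simp [cross3] <;> ring
    have hcz : cross3 μ b = 0 := by
      rcases h with h | h
      · rw [h]; exact hcsmul _
      · rw [h, ← neg_smul]; exact hcsmul _
    rw [hcz]
    have hz : cross3 μ 0 = 0 := by
      ext i; fin_cases i <;> simp [cross3]
    rw [hz]
    simp
end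

section
/- Let η : ℝ → ℝ be a positive function, b ∈ ℝ³ fixed, α > 0, and let μ : ℝ → ℝ³ solve dμ/dt = −μ × (b η(t)) − α μ × (μ × (b η(t))). Then d/dt[−μ(t)·b] = −α η(t) ‖μ(t) × b‖² ≤ 0. -/
open RealInnerProductSpace

theorem rode_landau_lifshitz_lyapunov (α : ℝ) (hα : 0 < α)
    (b : EuclideanSpace ℝ (Fin 3)) (η : ℝ → ℝ) (hη : ∀ t, 0 < η t)
    (μ : ℝ → EuclideanSpace ℝ (Fin 3))
    (hμ : ∀ t, HasDerivAt μ
      (-(cross3 (μ t) (η t • b)) - α • cross3 (μ t) (cross3 (μ t) (η t • b))) t) :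
    ∀ t : ℝ,
      HasDerivAt (fun s => -⟪μ s, b⟫) (-(α * η t * ‖cross3 (μ t) b‖ ^ 2)) t ∧
      -(α * η t * ‖cross3 (μ t) b‖ ^ 2) ≤ 0 := by
  intro t
  constructor
  · have h := ((hμ t).inner ℝ (hasDerivAt_const t b)).neg
    convert h using 1
    · rfl
    · rfl
    · rfl
    have : ‖cross3 (μ t) b‖ ^ 2 = ⟪cross3 (μ t) b, cross3 (μ t) b⟫ := by
      rw [real_inner_self_eq_norm_sq]
    rw [this]
    simp only [cross3, PiLp.inner_apply, RCLike.inner_apply, conj_trivial,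
      Fin.sum_univ_three, inner_zero_right, PiLp.sub_apply, PiLp.neg_apply,
      PiLp.smul_apply, smul_eq_mul, Matrix.cons_val_zero, Matrix.cons_val_one,
      Matrix.head_cons, Matrix.cons_val_two, Matrix.tail_cons]
    ring
  · have : 0 ≤ α * η t * ‖cross3 (μ t) b‖ ^ 2 := mul_nonneg (mul_nonneg hα.le (hη t).le) (pow_two_nonneg _)
    linarith
end
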